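/- arXiv:1801.09922 — 9 statements merged into one kernel-verified Lean document; each statement's English description precedes it below -/
import Mathlib

section
/- Let F : Y → [0, +∞] be a proper convex function that is sequentially lower semicontinuous with respect to the weak topology of Y, and let J : X → [0, +∞] be proper, convex and sequentially lower semicontinuous with respect to the weak-* topology of X. Assume: (i) there exists ũ ∈ X with F(Kũ) + J(ũ) < ∞, and (ii) for every a, b ≥ 0 the set {u ∈ X : F(Ku) ≤ a and J(u) ≤ b} is bounded in the dual norm of X. Then the functional Φ(u) := F(Ku) + J(u) attains its infimum over X, and the set of minimizers of Φ is a convex subset of X. -/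
open scoped ENNReal RealInnerProductSpace
open Filter

private lemma ennreal_le_liminf_add (u v : ℕ → ℝ≥0∞) :
    liminf u atTop + liminf v atTop ≤ liminf (fun n => u n + v n) atTop := by
  rcases eq_or_ne (liminf u atTop) 0 with h | ha
  · rw [h, zero_add]
    exact liminf_le_liminf (Eventually.of_forall fun n => le_add_self)
  rcases eq_or_ne (liminf v atTop) 0 with h | hb
  · rw [h, add_zero]
    exact liminf_le_liminf (Eventually.of_forall fun n => le_self_add)
  refine le_of_forall_lt fun c hc => ?_
  obtain ⟨a', ha', b', hb', hc'⟩ := ENNReal.exists_lt_add_of_lt_add hc ha hb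
  have hev : ∀ᶠ n in atTop, a' + b' ≤ u n + v n := by
    filter_upwards [eventually_lt_of_lt_liminf ha', eventually_lt_of_lt_liminf hb'] with n h1 h2
    exact add_le_add h1.le h2.le
  exact lt_of_lt_of_le hc' (le_liminf_of_le (by isBoundedDefault) hev)

/-- **Existence and convexity of minimizers of variational regularization.**
Z is a separable real normed space, X := Z* its dual with the weak-* topology,
Y a real Hilbert space, L : Y → Z bounded linear and K : X → Y defined by
⟨Ku, g⟩ = u(Lg). F : Y → [0, ∞] is proper, convex and sequentially weakly lower
semicontinuous, J : X → [0, ∞] proper, convex and sequentially weak-* lower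
semicontinuous; there is ũ with F(Kũ) + J(ũ) < ∞, and sublevel sets
{u : F(Ku) ≤ a, J(u) ≤ b} are bounded in the dual norm. Then
Φ(u) := F(Ku) + J(u) attains its infimum and its set of minimizers is convex. -/
theorem stmt_0
    {Z : Type*} [NormedAddCommGroup Z] [NormedSpace ℝ Z] [TopologicalSpace.SeparableSpace Z]
    {Y : Type*} [NormedAddCommGroup Y] [InnerProductSpace ℝ Y] [CompleteSpace Y]
    (L : Y →L[ℝ] Z)
    (K : StrongDual ℝ Z → Y)
    (hK : ∀ (u : StrongDual ℝ Z) (g : Y), ⟪K u, g⟫ = u (L g))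
    (F : Y → ℝ≥0∞)
    (hFproper : ∃ y, F y ≠ ⊤)
    (hFconv : ∀ y₁ y₂ : Y, ∀ t : ℝ, 0 ≤ t → t ≤ 1 →
      F (t • y₁ + (1 - t) • y₂) ≤ ENNReal.ofReal t * F y₁ + ENNReal.ofReal (1 - t) * F y₂)
    (hFlsc : ∀ (y : ℕ → Y) (y₀ : Y),
      (∀ g : Y, Tendsto (fun n => ⟪y n, g⟫) atTop (nhds ⟪y₀, g⟫)) →
      F y₀ ≤ liminf (fun n => F (y n)) atTop)
    (J : StrongDual ℝ Z → ℝ≥0∞)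
    (hJproper : ∃ u, J u ≠ ⊤)
    (hJconv : ∀ u₁ u₂ : StrongDual ℝ Z, ∀ t : ℝ, 0 ≤ t → t ≤ 1 →
      J (t • u₁ + (1 - t) • u₂) ≤ ENNReal.ofReal t * J u₁ + ENNReal.ofReal (1 - t) * J u₂)
    (hJlsc : ∀ (u : ℕ → StrongDual ℝ Z) (u₀ : StrongDual ℝ Z),
      (∀ z : Z, Tendsto (fun n => u n z) atTop (nhds (u₀ z))) →
      J u₀ ≤ liminf (fun n => J (u n)) atTop)
    (hfinite : ∃ utilde : StrongDual ℝ Z, F (K utilde) + J utilde < ⊤)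
    (hbound : ∀ a b : ℝ≥0∞, a ≠ ⊤ → b ≠ ⊤ →
      ∃ C : ℝ, ∀ u : StrongDual ℝ Z, F (K u) ≤ a → J u ≤ b → ‖u‖ ≤ C) :
    (∃ uhat : StrongDual ℝ Z, ∀ u, F (K uhat) + J uhat ≤ F (K u) + J u)
    ∧ Convex ℝ {u : StrongDual ℝ Z | ∀ w, F (K u) + J u ≤ F (K w) + J w} := by
  classical
  -- K is linear (on convex combinations)
  have hKlin : ∀ (s t : ℝ) (u v : StrongDual ℝ Z),
      K (s • u + t • v) = s • K u + t • K v := by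
    intro s t u v
    apply ext_inner_right ℝ
    intro g
    rw [hK, inner_add_left, real_inner_smul_left, real_inner_smul_left, hK, hK]
    simp [smul_eq_mul]
  -- convexity of Φ
  have hPhiConv : ∀ (u v : StrongDual ℝ Z) (t : ℝ), 0 ≤ t → t ≤ 1 →
      F (K (t • u + (1 - t) • v)) + J (t • u + (1 - t) • v)
        ≤ ENNReal.ofReal t * (F (K u) + J u) + ENNReal.ofReal (1 - t) * (F (K v) + J v) := by
    intro u v t ht0 ht1
    have h1 : F (K (t • u + (1 - t) • v)) ≤
        ENNReal.ofReal t * F (K u) + ENNReal.ofReal (1 - t) * F (K v) := by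
      rw [hKlin]
      exact hFconv _ _ t ht0 ht1
    have h2 := hJconv u v t ht0 ht1
    calc F (K (t • u + (1 - t) • v)) + J (t • u + (1 - t) • v)
        ≤ (ENNReal.ofReal t * F (K u) + ENNReal.ofReal (1 - t) * F (K v))
          + (ENNReal.ofReal t * J u + ENNReal.ofReal (1 - t) * J v) := add_le_add h1 h2
      _ = ENNReal.ofReal t * (F (K u) + J u) + ENNReal.ofReal (1 - t) * (F (K v) + J v) := by
          ring
  -- convexity of minimizer set
  have hconv : Convex ℝ {u : StrongDual ℝ Z | ∀ w, F (K u) + J u ≤ F (K w) + J w} := by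
    intro x hx y hy a b ha hb hab
    have hb' : b = 1 - a := by linarith
    intro w
    subst hb'
    have ha1 : a ≤ 1 := by linarith
    calc F (K (a • x + (1 - a) • y)) + J (a • x + (1 - a) • y)
        ≤ ENNReal.ofReal a * (F (K x) + J x)
          + ENNReal.ofReal (1 - a) * (F (K y) + J y) := hPhiConv x y a ha ha1
      _ ≤ ENNReal.ofReal a * (F (K w) + J w)
          + ENNReal.ofReal (1 - a) * (F (K w) + J w) := by
          exact add_le_add (mul_le_mul_right (hx w) _) (mul_le_mul_right (hy w) _)
      _ = (ENNReal.ofReal a + ENNReal.ofReal (1 - a)) * (F (K w) + J w) := by ring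
      _ = (F (K w) + J w) := by
          rw [← ENNReal.ofReal_add ha hb]
          simp
  refine ⟨?_, hconv⟩
  -- existence of a minimizer
  set m : ℝ≥0∞ := ⨅ u, F (K u) + J u with hm
  obtain ⟨utilde, hut⟩ := hfinite
  have hm_top : m ≠ ⊤ := fun h => by
    have := iInf_le (fun u => F (K u) + J u) utilde
    rw [← hm, h] at this
    exact absurd (top_le_iff.mp this) hut.ne
  -- a minimizing sequence
  have hseq : ∀ n : ℕ, ∃ u : StrongDual ℝ Z,
      F (K u) + J u < m + 1 / (n + 1) := by
    intro n
    have hδ : (1 : ℝ≥0∞) / (n + 1) ≠ 0 := by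
      simp [ENNReal.div_eq_zero_iff]
    have : m < m + 1 / (n + 1) := ENNReal.lt_add_right hm_top hδ
    exact iInf_lt_iff.mp this
  choose u hu using hseq
  have hδle : ∀ n : ℕ, (1 : ℝ≥0∞) / (n + 1) ≤ 1 := by
    intro n
    apply ENNReal.div_le_of_le_mul
    rw [one_mul]
    exact le_add_self
  have hum1 : ∀ n, F (K (u n)) + J (u n) ≤ m + 1 := fun n =>
    (hu n).le.trans (add_le_add_right (hδle n) m)
  have hm1top : m + 1 ≠ ⊤ := ENNReal.add_ne_top.mpr ⟨hm_top, ENNReal.one_ne_top⟩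
  obtain ⟨C, hC⟩ := hbound (m + 1) (m + 1) hm1top hm1top
  have hnorm : ∀ n, ‖u n‖ ≤ C := fun n =>
    hC (u n) (le_trans le_self_add (hum1 n)) (le_trans le_add_self (hum1 n))
  -- sequential Banach–Alaoglu via embedding into ℝ^ℕ
  haveI : Nonempty Z := ⟨0⟩
  set S : Set (WeakDual ℝ Z) :=
    WeakDual.toStrongDual ⁻¹' Metric.closedBall 0 C with hS
  have hScomp : IsCompact S := WeakDual.isCompact_closedBall 0 C
  have hmemS : ∀ n, StrongDual.toWeakDual (u n) ∈ S := by
    intro n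
    simp only [hS, Set.mem_preimage, Metric.mem_closedBall, dist_zero_right]
    exact hnorm n
  haveI : CompactSpace ↥S := isCompact_iff_compactSpace.mp hScomp
  set e : WeakDual ℝ Z → (ℕ → ℝ) :=
    fun w n => w (TopologicalSpace.denseSeq Z n) with he
  have he_cont : Continuous e :=
    continuous_pi fun n => WeakDual.eval_continuous _
  have he_inj : Function.Injective e := by
    intro w₁ w₂ h
    have hdense : Dense (Set.range (TopologicalSpace.denseSeq Z)) :=
      TopologicalSpace.denseRange_denseSeq Z
    have heq : (WeakDual.toStrongDual w₁ : Z → ℝ) = WeakDual.toStrongDual w₂ := by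
      apply Continuous.ext_on hdense (WeakDual.toStrongDual w₁).continuous
        (WeakDual.toStrongDual w₂).continuous
      rintro z ⟨n, rfl⟩
      exact congrFun h n
    exact WeakDual.toStrongDual.injective (ContinuousLinearMap.ext fun z => congrFun heq z)
  set g : ↥S → (ℕ → ℝ) := fun w => e w.val with hg
  have hg_cont : Continuous g := he_cont.comp continuous_subtype_val
  have hg_inj : Function.Injective g := fun a b h =>
    Subtype.ext (he_inj h)
  have hemb : Topology.IsEmbedding g := (hg_cont.isClosedEmbedding hg_inj).toIsEmbedding
  set v : ℕ → ↥S := fun n => ⟨StrongDual.toWeakDual (u n), hmemS n⟩ with hv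
  obtain ⟨a, ⟨v₀, rfl⟩, φ, hφmono, hφtendsto⟩ :=
    (isCompact_range hg_cont).tendsto_subseq (fun n => Set.mem_range_self (f := g) (v n))
  have hvconv : Tendsto (v ∘ φ) atTop (nhds v₀) := by
    rw [hemb.tendsto_nhds_iff]
    exact hφtendsto
  have hwconv : Tendsto (fun k => StrongDual.toWeakDual (u (φ k))) atTop
      (nhds v₀.val) := (continuous_subtype_val.tendsto v₀).comp hvconv
  set u₀ : StrongDual ℝ Z := WeakDual.toStrongDual v₀.val with hu₀
  have hz : ∀ z : Z, Tendsto (fun k => u (φ k) z) atTop (nhds (u₀ z)) := by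
    intro z
    exact ((WeakDual.eval_continuous z).tendsto v₀.val).comp hwconv
  -- lower semicontinuity along the subsequence
  have hJ0 : J u₀ ≤ liminf (fun k => J (u (φ k))) atTop := hJlsc (u ∘ φ) u₀ hz
  have hF0 : F (K u₀) ≤ liminf (fun k => F (K (u (φ k)))) atTop := by
    apply hFlsc (fun k => K (u (φ k))) (K u₀)
    intro gY
    simp only [hK]
    exact hz (L gY)
  -- the limit is a minimizer
  have hlim : F (K u₀) + J u₀ ≤ m := by
    have h1 : F (K u₀) + J u₀ ≤
        liminf (fun k => F (K (u (φ k))) + J (u (φ k))) atTop := by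
      refine le_trans (add_le_add hF0 hJ0) ?_
      exact ennreal_le_liminf_add (fun k => F (K (u (φ k)))) (fun k => J (u (φ k)))
    have h2 : liminf (fun k => F (K (u (φ k))) + J (u (φ k))) atTop ≤
        liminf (fun k => m + 1 / (φ k + 1)) atTop := by
      exact liminf_le_liminf (Eventually.of_forall fun k => (hu (φ k)).le)
    have h3 : Tendsto (fun k => m + 1 / ((φ k : ℝ≥0∞) + 1)) atTop (nhds (m + 0)) := by
      apply Tendsto.add tendsto_const_nhds
      have hbase : Tendsto (fun n : ℕ => 1 / ((n : ℝ≥0∞) + 1)) atTop (nhds 0) := by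
        have := ENNReal.tendsto_inv_nat_nhds_zero.comp (tendsto_add_atTop_nat 1)
        refine this.congr fun n => ?_
        simp [one_div]
      exact hbase.comp (hφmono.tendsto_atTop)
    have h4 : liminf (fun k => m + 1 / ((φ k : ℝ≥0∞) + 1)) atTop = m := by
      rw [h3.liminf_eq, add_zero]
    calc F (K u₀) + J u₀ ≤ liminf (fun k => F (K (u (φ k))) + J (u (φ k))) atTop := h1
      _ ≤ liminf (fun k => m + 1 / ((φ k : ℝ≥0∞) + 1)) atTop := h2
      _ = m := h4
  exact ⟨u₀, fun w => hlim.trans (iInf_le (fun u => F (K u) + J u) w)⟩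
end

section
/- Let F : Y × Y → [0, +∞] be such that F(·, g) is proper and convex for every g ∈ Y, the joint lower semicontinuity holds (if y_n ⇀ y weakly in Y and g_n → g in norm then F(y, g) ≤ liminf_n F(y_n, g_n)), and g ↦ F(y, g) is norm-continuous for every y ∈ Y. Let J : X → [0, +∞] be proper, convex and sequentially weak-* lower semicontinuous, and assume: (i) for every g ∈ Y there exists u with F(Ku, g) + J(u) < ∞, and (ii) for all a, b, r ≥ 0 the set {u ∈ X : J(u) ≤ b and F(Ku, g) ≤ a for some g with ‖g‖ ≤ r} is norm-bounded. Then for every sequence f_n → f in Y and every choice of minimizers u_n of u ↦ F(Ku, f_n) + J(u), there exists a subsequence (u_{n_k}) converging in the weak-* topology of X to some u* that minimizes u ↦ F(Ku, f) + J(u). -/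
open scoped ENNReal RealInnerProductSpace
open Filter

private lemma liminf_add_liminf_le {a b : ℕ → ℝ≥0∞} :
    liminf a atTop + liminf b atTop ≤ liminf (fun n => a n + b n) atTop := by
  rcases eq_or_ne (liminf a atTop) 0 with hA | hA
  · rw [hA, zero_add]
    exact liminf_le_liminf (Eventually.of_forall fun n => le_add_self)
  rcases eq_or_ne (liminf b atTop) 0 with hB | hB
  · rw [hB, add_zero]
    exact liminf_le_liminf (Eventually.of_forall fun n => le_self_add)
  refine le_of_forall_lt_imp_le_of_dense fun e he => ?_
  obtain ⟨c, hc, d, hd, hecd⟩ := ENNReal.exists_lt_add_of_lt_add he hA hB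
  have h1 : ∀ᶠ n in atTop, c < a n := eventually_lt_of_lt_liminf hc
  have h2 : ∀ᶠ n in atTop, d < b n := eventually_lt_of_lt_liminf hd
  refine hecd.le.trans (le_liminf_of_le (by isBoundedDefault) ?_)
  filter_upwards [h1, h2] with n h1n h2n
  exact add_le_add h1n.le h2n.le

/-- Sequential Banach–Alaoglu: a norm-bounded sequence in the dual of a separable
normed space has a pointwise (weak-*) convergent subsequence. -/
private lemma seq_alaoglu {Z : Type*} [NormedAddCommGroup Z] [NormedSpace ℝ Z]
    [TopologicalSpace.SeparableSpace Z] (u : ℕ → StrongDual ℝ Z) (C : ℝ)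
    (hC : ∀ n, ‖u n‖ ≤ C) :
    ∃ φ : ℕ → ℕ, StrictMono φ ∧ ∃ ustar : StrongDual ℝ Z,
      ∀ z : Z, Tendsto (fun k => u (φ k) z) atTop (nhds (ustar z)) := by
  set B : Set (WeakDual ℝ Z) := WeakDual.toStrongDual ⁻¹' Metric.closedBall (0 : StrongDual ℝ Z) C with hBdef
  have hBcompact : IsCompact B := WeakDual.isCompact_closedBall (𝕜 := ℝ) (E := Z) 0 C
  have : CompactSpace B := isCompact_iff_compactSpace.mp hBcompact
  -- embed `B` into `ℕ → ℝ` via evaluation on a dense sequence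
  set s : ℕ → Z := TopologicalSpace.denseSeq Z with hsdef
  set e : B → (ℕ → ℝ) := fun w i => (w : WeakDual ℝ Z) (s i) with hedef
  have he_cont : Continuous e := by
    refine continuous_pi fun i => ?_
    exact (WeakDual.eval_continuous (s i)).comp continuous_subtype_val
  have he_inj : Function.Injective e := by
    intro w₁ w₂ h
    have heq : (WeakDual.toStrongDual (w₁ : WeakDual ℝ Z) : Z → ℝ) =
        (WeakDual.toStrongDual (w₂ : WeakDual ℝ Z) : Z → ℝ) := by
      refine Continuous.ext_on (TopologicalSpace.denseRange_denseSeq Z)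
        (map_continuous _) (map_continuous _) ?_
      rintro x ⟨i, rfl⟩
      exact congrFun h i
    ext
    exact DFunLike.coe_injective heq
  have he_emb : Topology.IsClosedEmbedding e := he_cont.isClosedEmbedding he_inj
  have : TopologicalSpace.MetrizableSpace B := he_emb.isEmbedding.metrizableSpace
  -- extract a convergent subsequence
  have hseq : IsSeqCompact (Set.univ : Set B) := isCompact_univ.isSeqCompact
  have hmem : ∀ n, (u n : WeakDual ℝ Z) ∈ B := by
    intro n
    simp only [hBdef, Set.mem_preimage, Metric.mem_closedBall, dist_zero_right]
    exact mem_closedBall_zero_iff.2 (hC n)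
  obtain ⟨a, -, φ, hφ, hconv⟩ :=
    hseq (x := fun n => (⟨u n, hmem n⟩ : B)) (fun n => Set.mem_univ _)
  refine ⟨φ, hφ, WeakDual.toStrongDual (a : WeakDual ℝ Z), fun z => ?_⟩
  have : Tendsto (fun k => ((⟨u (φ k), hmem (φ k)⟩ : B) : WeakDual ℝ Z)) atTop
      (nhds (a : WeakDual ℝ Z)) := (continuous_subtype_val.tendsto a).comp hconv
  exact ((WeakDual.eval_continuous z).tendsto _).comp this

/-- **Stability of variational regularization.**
Z is a separable real normed space, X := Z* its dual with the weak-* topology,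
Y a real Hilbert space, L : Y → Z bounded linear and K : X → Y defined by
⟨Ku, g⟩ = u(Lg). F : Y × Y → [0, ∞] is proper convex in its first argument,
jointly lower semicontinuous along weakly convergent first arguments and norm
convergent second arguments, and norm-continuous in its second argument;
J : X → [0, ∞] is proper, convex and sequentially weak-* lower semicontinuous;
the variational problems are always feasible and appropriate sublevel sets are
norm-bounded. Then for f_n → f in Y and minimizers u_n of u ↦ F(Ku, f_n) + J(u)
there is a subsequence converging weak-* to a minimizer of u ↦ F(Ku, f) + J(u). -/
theorem stmt_1
    {Z : Type*} [NormedAddCommGroup Z] [NormedSpace ℝ Z] [TopologicalSpace.SeparableSpace Z]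
    {Y : Type*} [NormedAddCommGroup Y] [InnerProductSpace ℝ Y] [CompleteSpace Y]
    (L : Y →L[ℝ] Z)
    (K : StrongDual ℝ Z → Y)
    (hK : ∀ (u : StrongDual ℝ Z) (g : Y), ⟪K u, g⟫ = u (L g))
    (F : Y → Y → ℝ≥0∞)
    (hFproper : ∀ g : Y, ∃ y, F y g ≠ ⊤)
    (hFconv : ∀ g : Y, ∀ y₁ y₂ : Y, ∀ t : ℝ, 0 ≤ t → t ≤ 1 →
      F (t • y₁ + (1 - t) • y₂) g
        ≤ ENNReal.ofReal t * F y₁ g + ENNReal.ofReal (1 - t) * F y₂ g)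
    (hFlsc : ∀ (y : ℕ → Y) (y₀ : Y) (g : ℕ → Y) (g₀ : Y),
      (∀ h : Y, Tendsto (fun n => ⟪y n, h⟫) atTop (nhds ⟪y₀, h⟫)) →
      Tendsto g atTop (nhds g₀) →
      F y₀ g₀ ≤ liminf (fun n => F (y n) (g n)) atTop)
    (hFcont : ∀ y : Y, Continuous (fun g => F y g))
    (J : StrongDual ℝ Z → ℝ≥0∞)
    (hJproper : ∃ u, J u ≠ ⊤)
    (hJconv : ∀ u₁ u₂ : StrongDual ℝ Z, ∀ t : ℝ, 0 ≤ t → t ≤ 1 →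
      J (t • u₁ + (1 - t) • u₂) ≤ ENNReal.ofReal t * J u₁ + ENNReal.ofReal (1 - t) * J u₂)
    (hJlsc : ∀ (u : ℕ → StrongDual ℝ Z) (u₀ : StrongDual ℝ Z),
      (∀ z : Z, Tendsto (fun n => u n z) atTop (nhds (u₀ z))) →
      J u₀ ≤ liminf (fun n => J (u n)) atTop)
    (hfinite : ∀ g : Y, ∃ u : StrongDual ℝ Z, F (K u) g + J u < ⊤)
    (hbound : ∀ a b : ℝ≥0∞, a ≠ ⊤ → b ≠ ⊤ → ∀ r : ℝ,
      ∃ C : ℝ, ∀ u : StrongDual ℝ Z, J u ≤ b →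
        (∃ g : Y, ‖g‖ ≤ r ∧ F (K u) g ≤ a) → ‖u‖ ≤ C) :
    ∀ (f : ℕ → Y) (f₀ : Y), Tendsto f atTop (nhds f₀) →
      ∀ u : ℕ → StrongDual ℝ Z,
        (∀ n, ∀ w : StrongDual ℝ Z,
          F (K (u n)) (f n) + J (u n) ≤ F (K w) (f n) + J w) →
        ∃ φ : ℕ → ℕ, StrictMono φ ∧
          ∃ ustar : StrongDual ℝ Z,
            (∀ z : Z, Tendsto (fun k => u (φ k) z) atTop (nhds (ustar z))) ∧
            (∀ w : StrongDual ℝ Z, F (K ustar) f₀ + J ustar ≤ F (K w) f₀ + J w) := by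
  intro f f₀ hf u hmin
  obtain ⟨w₀, hw₀⟩ := hfinite f₀
  have hFw₀ : F (K w₀) f₀ ≠ ⊤ := (lt_of_le_of_lt le_self_add hw₀).ne
  have hJw₀ : J w₀ ≠ ⊤ := (lt_of_le_of_lt le_add_self hw₀).ne
  set M : ℝ≥0∞ := F (K w₀) f₀ + 1 + J w₀ with hMdef
  have hM : M ≠ ⊤ := by
    simp [hMdef, ENNReal.add_eq_top, hFw₀, hJw₀]
  -- eventual bound on the values
  have hFn : Tendsto (fun n => F (K w₀) (f n)) atTop (nhds (F (K w₀) f₀)) :=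
    ((hFcont (K w₀)).tendsto f₀).comp hf
  have hlt : F (K w₀) f₀ < F (K w₀) f₀ + 1 := ENNReal.lt_add_right hFw₀ one_ne_zero
  have hev1 : ∀ᶠ n in atTop, F (K w₀) (f n) < F (K w₀) f₀ + 1 := hFn.eventually_lt_const hlt
  have hnorm : Tendsto (fun n => ‖f n‖) atTop (nhds ‖f₀‖) := hf.norm
  have hev2 : ∀ᶠ n in atTop, ‖f n‖ < ‖f₀‖ + 1 := hnorm.eventually_lt_const (by linarith)
  obtain ⟨N, hN⟩ := (hev1.and hev2).exists_forall_of_atTop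
  obtain ⟨C, hCbound⟩ := hbound M M hM hM (‖f₀‖ + 1)
  have hval : ∀ n, N ≤ n → F (K (u n)) (f n) + J (u n) ≤ M := by
    intro n hn
    calc F (K (u n)) (f n) + J (u n) ≤ F (K w₀) (f n) + J w₀ := hmin n w₀
      _ ≤ M := by
          rw [hMdef]
          exact add_le_add (hN n hn).1.le le_rfl
  have hCn : ∀ n, N ≤ n → ‖u n‖ ≤ C := by
    intro n hn
    refine hCbound (u n) (le_trans le_add_self (hval n hn)) ⟨f n, (hN n hn).2.le, ?_⟩
    exact le_trans le_self_add (hval n hn)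
  -- extract a weak-* convergent subsequence
  obtain ⟨ψ, hψ, ustar, hconv⟩ := seq_alaoglu (fun k => u (k + N)) C
    (fun k => hCn (k + N) (Nat.le_add_left N k))
  set φ : ℕ → ℕ := fun k => ψ k + N with hφdef
  have hφmono : StrictMono φ := fun a b h => by
    simp only [hφdef]
    exact Nat.add_lt_add_right (hψ h) N
  have hconvφ : ∀ z : Z, Tendsto (fun k => u (φ k) z) atTop (nhds (ustar z)) := hconv
  refine ⟨φ, hφmono, ustar, hconvφ, fun w => ?_⟩
  -- the limit is a minimizer
  have hfφ : Tendsto (fun k => f (φ k)) atTop (nhds f₀) := hf.comp hφmono.tendsto_atTop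
  have h1 : F (K ustar) f₀ ≤ liminf (fun k => F (K (u (φ k))) (f (φ k))) atTop := by
    refine hFlsc (fun k => K (u (φ k))) (K ustar) (fun k => f (φ k)) f₀ ?_ hfφ
    intro h
    simp only [hK]
    exact hconvφ (L h)
  have h2 : J ustar ≤ liminf (fun k => J (u (φ k))) atTop := hJlsc _ _ hconvφ
  have h3 : liminf (fun k => F (K (u (φ k))) (f (φ k)) + J (u (φ k))) atTop
      ≤ F (K w) f₀ + J w := by
    have htend : Tendsto (fun k => F (K w) (f (φ k)) + J w) atTop
        (nhds (F (K w) f₀ + J w)) := by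
      exact (((hFcont (K w)).tendsto f₀).comp hfφ).add tendsto_const_nhds
    calc liminf (fun k => F (K (u (φ k))) (f (φ k)) + J (u (φ k))) atTop
        ≤ liminf (fun k => F (K w) (f (φ k)) + J w) atTop :=
          liminf_le_liminf (Eventually.of_forall fun k => hmin (φ k) w)
      _ = F (K w) f₀ + J w := htend.liminf_eq
  calc F (K ustar) f₀ + J ustar
      ≤ liminf (fun k => F (K (u (φ k))) (f (φ k))) atTop
        + liminf (fun k => J (u (φ k))) atTop := add_le_add h1 h2
    _ ≤ liminf (fun k => F (K (u (φ k))) (f (φ k)) + J (u (φ k))) atTop :=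
        liminf_add_liminf_le
    _ ≤ F (K w) f₀ + J w := h3
end

section
/- Let J : X → ℝ ∪ {+∞} be proper and convex, let α > 0 and δ ≥ 0, and let u†, û ∈ X and f, f^δ, v ∈ Y satisfy: Ku† = f, (1/2)‖f − f^δ‖² ≤ δ, the source condition K*v ∈ ∂J(u†), and the optimality condition p̂ := (1/α) K*(f^δ − Kû) ∈ ∂J(û). Then the error estimate ⟨K*v − p̂, u† − û⟩ + (1/(2α))‖Kû − f^δ‖² ≤ δ/α + (α/2)‖v‖² holds; in particular, choosing α = √(2δ)/‖v‖ (for v ≠ 0) yields ⟨K*v − p̂, u† − û⟩ ≤ √(2δ)·‖v‖, i.e., the symmetric Bregman distance is O(√δ). -/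
open scoped RealInnerProductSpace

/-- Subgradient of an extended-real-valued convex function:
p ∈ ∂J(v) means J(w) ≥ J(v) + ⟨p, w − v⟩ for all w. -/
def ESubgradAt {X : Type*} [NormedAddCommGroup X] [InnerProductSpace ℝ X]
    (J : X → EReal) (p v : X) : Prop :=
  ∀ w, J v + (⟪p, w - v⟫ : ℝ) ≤ J w

lemma stmt_7_helper {Y : Type*} [NormedAddCommGroup Y] [InnerProductSpace ℝ Y]
    (α δ : ℝ) (hα : 0 < α) (e r v : Y) (hnoise : (1/2) * ‖e‖^2 ≤ δ) :
    ⟪v, e - r⟫ + (1/α) * ⟪r, e - r⟫ + (1/(2*α)) * ‖r‖^2 ≤ δ/α + (α/2) * ‖v‖^2 := by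
  have hα' : α ≠ 0 := ne_of_gt hα
  have hnn : (0:ℝ) ≤ ‖e - α • v - r‖ ^ 2 := sq_nonneg _
  have hexp : ‖e - α • v - r‖ ^ 2
      = ‖e‖^2 + α^2 * ‖v‖^2 + ‖r‖^2 - 2*α*⟪v, e⟫ - 2*⟪r, e⟫ + 2*α*⟪v, r⟫ := by
    simp only [← real_inner_self_eq_norm_sq, inner_sub_left, inner_sub_right,
      real_inner_smul_left, real_inner_smul_right]
    rw [real_inner_comm e v, real_inner_comm e r, real_inner_comm r v]
    ring
  have hnn' : (0:ℝ) ≤ ‖e‖^2 + α^2 * ‖v‖^2 + ‖r‖^2 - 2*α*⟪v, e⟫ - 2*⟪r, e⟫ + 2*α*⟪v, r⟫ :=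
    hexp ▸ hnn
  have hve : (⟪v, e - r⟫ : ℝ) = ⟪v, e⟫ - ⟪v, r⟫ := inner_sub_right v e r
  have hre : (⟪r, e - r⟫ : ℝ) = ⟪r, e⟫ - ‖r‖^2 := by
    rw [inner_sub_right, real_inner_self_eq_norm_sq]
  rw [hve, hre]
  have hmul : α * (⟪v, e⟫ - ⟪v, r⟫) + (⟪r, e⟫ - ‖r‖ ^ 2) + (1/2) * ‖r‖ ^ 2
      ≤ δ + (α ^ 2 / 2) * ‖v‖ ^ 2 := by linarith
  have h1 : (⟪v, e⟫ - ⟪v, r⟫) + (1/α) * (⟪r, e⟫ - ‖r‖^2) + (1/(2*α)) * ‖r‖^2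
      = (1/α) * (α * (⟪v, e⟫ - ⟪v, r⟫) + (⟪r, e⟫ - ‖r‖ ^ 2) + (1/2) * ‖r‖ ^ 2) := by
    field_simp
  have h2 : δ / α + (α / 2) * ‖v‖ ^ 2 = (1/α) * (δ + (α ^ 2 / 2) * ‖v‖ ^ 2) := by
    field_simp
  rw [h1, h2]
  exact mul_le_mul_of_nonneg_left hmul (by positivity)

lemma stmt_7_scal' (δ nv s : ℝ) (hnv : (0:ℝ) < nv) (hs : 0 < s)
    (hs2 : s ^ 2 = 2 * δ) :
    δ / (s / nv) + ((s / nv) / 2) * nv^2 = s * nv := by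
  have hs' : s ≠ 0 := ne_of_gt hs
  have hnv' : nv ≠ 0 := ne_of_gt hnv
  have hδ' : δ = s ^ 2 / 2 := by linarith
  subst hδ'
  field_simp
  ring

lemma stmt_7_scal (δ nv : ℝ) (hnv : (0:ℝ) < nv) (hs : 0 < Real.sqrt (2*δ))
    (hδ : 0 ≤ δ) :
    δ / (Real.sqrt (2*δ) / nv) + ((Real.sqrt (2*δ) / nv) / 2) * nv^2
      = Real.sqrt (2*δ) * nv :=
  stmt_7_scal' δ nv _ hnv hs (Real.sq_sqrt (by linarith))

/-- **Error estimate under the source condition for quadratic-fidelity Tikhonov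
regularization.** If Ku† = f, ½‖f − f^δ‖² ≤ δ, K*v ∈ ∂J(u†) and
p̂ := (1/α)K*(f^δ − Kû) ∈ ∂J(û), then
⟨K*v − p̂, u† − û⟩ + (1/(2α))‖Kû − f^δ‖² ≤ δ/α + (α/2)‖v‖²;
in particular for α = √(2δ)/‖v‖ (v ≠ 0) the symmetric Bregman distance satisfies
⟨K*v − p̂, u† − û⟩ ≤ √(2δ)‖v‖. -/
theorem stmt_7
    {X Y : Type*} [NormedAddCommGroup X] [InnerProductSpace ℝ X] [CompleteSpace X]
    [NormedAddCommGroup Y] [InnerProductSpace ℝ Y] [CompleteSpace Y]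
    (K : X →L[ℝ] Y)
    (J : X → EReal)
    (hJbot : ∀ u, J u ≠ ⊥)
    (hJproper : ∃ u, J u ≠ ⊤)
    (hJconv : ∀ u v : X, ∀ t : ℝ, 0 ≤ t → t ≤ 1 →
      J (t • u + (1 - t) • v) ≤ (t : EReal) * J u + ((1 - t : ℝ) : EReal) * J v)
    (α δ : ℝ) (hα : 0 < α) (hδ : 0 ≤ δ)
    (udag uhat : X) (f fδ : Y) (v : Y)
    (hdata : K udag = f)
    (hnoise : (1 / 2) * ‖f - fδ‖ ^ 2 ≤ δ)
    (hsource : ESubgradAt J (ContinuousLinearMap.adjoint K v) udag)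
    (hopt : ESubgradAt J ((1 / α) • ContinuousLinearMap.adjoint K (fδ - K uhat)) uhat) :
    ⟪ContinuousLinearMap.adjoint K v
        - (1 / α) • ContinuousLinearMap.adjoint K (fδ - K uhat), udag - uhat⟫
        + (1 / (2 * α)) * ‖K uhat - fδ‖ ^ 2
      ≤ δ / α + (α / 2) * ‖v‖ ^ 2
    ∧ (v ≠ 0 → α = Real.sqrt (2 * δ) / ‖v‖ →
        ⟪ContinuousLinearMap.adjoint K v
            - (1 / α) • ContinuousLinearMap.adjoint K (fδ - K uhat), udag - uhat⟫
          ≤ Real.sqrt (2 * δ) * ‖v‖) := by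
  have hα' : α ≠ 0 := ne_of_gt hα
  have key : (⟪ContinuousLinearMap.adjoint K v
        - (1 / α) • ContinuousLinearMap.adjoint K (fδ - K uhat), udag - uhat⟫ : ℝ)
      = ⟪v, (f - fδ) - (K uhat - fδ)⟫
        + (1 / α) * ⟪K uhat - fδ, (f - fδ) - (K uhat - fδ)⟫ := by
    rw [inner_sub_left, real_inner_smul_left,
      ContinuousLinearMap.adjoint_inner_left, ContinuousLinearMap.adjoint_inner_left]
    have hK : K (udag - uhat) = (f - fδ) - (K uhat - fδ) := by
      rw [map_sub, hdata]; abel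
    have hfδ : fδ - K uhat = -(K uhat - fδ) := by abel
    rw [hK, hfδ, inner_neg_left]
    ring
  have main : (⟪ContinuousLinearMap.adjoint K v
        - (1 / α) • ContinuousLinearMap.adjoint K (fδ - K uhat), udag - uhat⟫ : ℝ)
        + (1 / (2 * α)) * ‖K uhat - fδ‖ ^ 2 ≤ δ / α + (α / 2) * ‖v‖ ^ 2 := by
    rw [key]
    exact stmt_7_helper α δ hα (f - fδ) (K uhat - fδ) v hnoise
  refine ⟨main, fun hv hαeq => ?_⟩
  have hvpos : (0:ℝ) < ‖v‖ := norm_pos_iff.mpr hv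
  have hspos : (0:ℝ) < Real.sqrt (2 * δ) := by
    have hs : Real.sqrt (2 * δ) = α * ‖v‖ := by
      rw [hαeq]; field_simp
    rw [hs]; positivity
  have heq : δ / α + (α / 2) * ‖v‖ ^ 2 = Real.sqrt (2 * δ) * ‖v‖ := by
    rw [hαeq]
    exact stmt_7_scal δ ‖v‖ hvpos hspos hδ
  have hnnr : (0:ℝ) ≤ (1 / (2 * α)) * ‖K uhat - fδ‖ ^ 2 := by positivity
  linarith [heq ▸ main]
end

section
/- Let F : Y → [0, +∞) be convex, let J : X → ℝ ∪ {+∞} be proper and convex, and consider Bregman iterates: sequences (u^k) in X and (p^k) with p^k ∈ ∂J(u^k) such that for every k ≥ 0 the point u^{k+1} minimizes u ↦ F(Ku) + D_J^{p^k}(u, u^k) over X, where D_J^{p^k}(u, u^k) := J(u) − J(u^k) − ⟨p^k, u − u^k⟩. If F(Ku⁰) < ∞, then for every k ≥ 0 one has the monotone decrease F(Ku^{k+1}) + D_J^{p^k}(u^{k+1}, u^k) ≤ F(Ku^k), consequently for every N ≥ 1 one has ∑_{k=0}^{N−1} D_J^{p^k}(u^{k+1}, u^k) ≤ F(Ku⁰),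 and therefore D_J^{p^k}(u^{k+1}, u^k) → 0 as k → ∞. -/
open scoped RealInnerProductSpace
open Filter

/-- Generalized Bregman distance D_J^p(u, v) := J(u) − J(v) − ⟨p, u − v⟩. -/
noncomputable def ebreg {X : Type*} [NormedAddCommGroup X] [InnerProductSpace ℝ X]
    (J : X → EReal) (p u v : X) : EReal :=
  J u - J v - (⟪p, u - v⟫ : ℝ)

lemma ecoe_sum (f : ℕ → ℝ) (N : ℕ) :
    ((∑ k ∈ Finset.range N, f k : ℝ) : EReal) = ∑ k ∈ Finset.range N, (f k : EReal) := by
  induction N with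
  | zero => simp
  | succ n ih => simp [Finset.sum_range_succ, EReal.coe_add, ih]

/-- **Monotone decrease of the data fidelity along the Bregman iteration.**
F : Y → [0, ∞) convex, J proper convex, and u^{k+1} minimizes
u ↦ F(Ku) + D_J^{p^k}(u, u^k) with p^k ∈ ∂J(u^k). Then
F(Ku^{k+1}) + D_J^{p^k}(u^{k+1}, u^k) ≤ F(Ku^k) for all k, the Bregman distances of
consecutive iterates have partial sums bounded by F(Ku⁰), and they tend to 0. -/
theorem stmt_8
    {X Y : Type*} [NormedAddCommGroup X] [InnerProductSpace ℝ X] [CompleteSpace X]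
    [NormedAddCommGroup Y] [InnerProductSpace ℝ Y] [CompleteSpace Y]
    (K : X →L[ℝ] Y)
    (F : Y → ℝ) (hFconv : ConvexOn ℝ Set.univ F) (hFnonneg : ∀ y, 0 ≤ F y)
    (J : X → EReal)
    (hJbot : ∀ u, J u ≠ ⊥)
    (hJproper : ∃ u, J u ≠ ⊤)
    (hJconv : ∀ u v : X, ∀ t : ℝ, 0 ≤ t → t ≤ 1 →
      J (t • u + (1 - t) • v) ≤ (t : EReal) * J u + ((1 - t : ℝ) : EReal) * J v)
    (u p : ℕ → X)
    (hsub : ∀ k, ESubgradAt J (p k) (u k))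
    (hmin : ∀ k, ∀ w : X,
      (F (K (u (k + 1))) : EReal) + ebreg J (p k) (u (k + 1)) (u k)
        ≤ (F (K w) : EReal) + ebreg J (p k) w (u k)) :
    (∀ k, (F (K (u (k + 1))) : EReal) + ebreg J (p k) (u (k + 1)) (u k)
        ≤ (F (K (u k)) : EReal))
    ∧ (∀ N : ℕ, 1 ≤ N →
        ∑ k ∈ Finset.range N, ebreg J (p k) (u (k + 1)) (u k) ≤ (F (K (u 0)) : EReal))
    ∧ Tendsto (fun k => ebreg J (p k) (u (k + 1)) (u k)) atTop (nhds 0) := by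
  classical
  set a : ℕ → ℝ := fun k => F (K (u k)) with ha
  obtain ⟨u₀, hu₀⟩ := hJproper
  have hJfin : ∀ k, ∃ r : ℝ, J (u k) = (r : EReal) := by
    intro k
    have hne : J (u k) ≠ ⊤ := by
      intro htop
      have h := hsub k u₀
      rw [htop, EReal.top_add_coe] at h
      exact hu₀ (top_le_iff.mp h)
    exact ⟨(J (u k)).toReal, (EReal.coe_toReal hne (hJbot _)).symm⟩
  have hself : ∀ k, ebreg J (p k) (u k) (u k) = 0 := by
    intro k
    obtain ⟨r, hr⟩ := hJfin k
    simp [ebreg, hr, ← EReal.coe_sub]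
  have h1 : ∀ k, (F (K (u (k + 1))) : EReal) + ebreg J (p k) (u (k + 1)) (u k)
      ≤ (F (K (u k)) : EReal) := by
    intro k
    have h := hmin k (u k)
    rwa [hself k, add_zero] at h
  have hD0 : ∀ k, (0 : EReal) ≤ ebreg J (p k) (u (k + 1)) (u k) := by
    intro k
    obtain ⟨r, hr⟩ := hJfin k
    have h := hsub k (u (k + 1))
    rw [hr] at h
    unfold ebreg
    rw [hr]
    by_cases hx : J (u (k + 1)) = ⊤
    · rw [hx, EReal.top_sub_coe, EReal.top_sub_coe]
      exact le_top
    · obtain ⟨s, hs⟩ : ∃ s : ℝ, J (u (k + 1)) = (s : EReal) :=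
        ⟨(J (u (k + 1))).toReal, (EReal.coe_toReal hx (hJbot _)).symm⟩
      rw [hs] at h ⊢
      rw [← EReal.coe_add, EReal.coe_le_coe_iff] at h
      rw [← EReal.coe_sub, ← EReal.coe_sub, ← EReal.coe_zero, EReal.coe_le_coe_iff]
      linarith
  have hDreal : ∀ k, ∃ d : ℝ, 0 ≤ d ∧ ebreg J (p k) (u (k + 1)) (u k) = (d : EReal)
      ∧ a (k + 1) + d ≤ a k := by
    intro k
    have h := h1 k
    have hne : ebreg J (p k) (u (k + 1)) (u k) ≠ ⊤ := by
      intro htop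
      rw [htop, EReal.coe_add_top] at h
      exact EReal.coe_ne_top _ (top_le_iff.mp h)
    have hnb : ebreg J (p k) (u (k + 1)) (u k) ≠ ⊥ := by
      intro hbot
      have := hD0 k
      rw [hbot] at this
      exact absurd this (by simp)
    refine ⟨(ebreg J (p k) (u (k + 1)) (u k)).toReal, ?_, (EReal.coe_toReal hne hnb).symm, ?_⟩
    · have h0 := hD0 k
      rw [← EReal.coe_toReal hne hnb, ← EReal.coe_zero, EReal.coe_le_coe_iff] at h0
      exact h0
    · rw [← EReal.coe_toReal hne hnb, ← EReal.coe_add, EReal.coe_le_coe_iff] at h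
      exact h
  choose d hd0 hdeq hdle using hDreal
  have haanti : ∀ k, a (k + 1) ≤ a k := fun k => by
    have := hdle k; linarith [hd0 k]
  have h2 : ∀ N : ℕ, 1 ≤ N →
      ∑ k ∈ Finset.range N, ebreg J (p k) (u (k + 1)) (u k) ≤ (F (K (u 0)) : EReal) := by
    intro N _
    have hsum : ∑ k ∈ Finset.range N, ebreg J (p k) (u (k + 1)) (u k)
        = ((∑ k ∈ Finset.range N, d k : ℝ) : EReal) := by
      rw [ecoe_sum]
      exact Finset.sum_congr rfl fun k _ => hdeq k
    rw [hsum, EReal.coe_le_coe_iff]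
    have htel : ∑ k ∈ Finset.range N, d k ≤ ∑ k ∈ Finset.range N, (a k - a (k + 1)) :=
      Finset.sum_le_sum fun k _ => by linarith [hdle k]
    rw [Finset.sum_range_sub' a N] at htel
    have : 0 ≤ a N := hFnonneg _
    calc ∑ k ∈ Finset.range N, d k ≤ a 0 - a N := htel
      _ ≤ a 0 := by linarith
  refine ⟨h1, h2, ?_⟩
  have hanti : Antitone a := antitone_nat_of_succ_le haanti
  have hbdd : BddBelow (Set.range a) := ⟨0, fun x ⟨k, hk⟩ => hk ▸ hFnonneg _⟩
  have hconv : Tendsto a atTop (nhds (⨅ k, a k)) := tendsto_atTop_ciInf hanti hbdd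
  have hdiff : Tendsto (fun k => a k - a (k + 1)) atTop (nhds 0) := by
    have := hconv.sub ((hconv.comp (tendsto_add_atTop_nat 1)))
    simpa using this
  have hdten : Tendsto d atTop (nhds 0) :=
    squeeze_zero hd0 (fun k => by linarith [hdle k]) hdiff
  have hfin : Tendsto (fun k => ((d k : ℝ) : EReal)) atTop (nhds ((0 : ℝ) : EReal)) :=
    EReal.tendsto_coe.mpr hdten
  rw [EReal.coe_zero] at hfin
  exact hfin.congr fun k => (hdeq k).symm
end

section
/- Let F : Y → [0, +∞) be convex and Fréchet differentiable with gradient ∇F, let J : X → ℝ ∪ {+∞} be proper and convex, and let δ ≥ 0 and u† ∈ X with F(Ku†) ≤ δ and J(u†) < ∞. Suppose for a fixed k ≥ 1 the Bregman iterates satisfy: p^{k−1} ∈ ∂J(u^{k−1}), p^k := p^{k−1} − K*∇F(Ku^k) ∈ ∂J(u^k), and the discrepancy principle is not yet satisfied, i.e., δ < F(Ku^k). Then the Bregman distances to u† are strictly Fejér monotone: D_J^{p^k}(u†, u^k) < D_J^{p^{k−1}}(u†, u^{k−1}). -/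
open scoped RealInnerProductSpace
open scoped RealInnerProductSpace

lemma grad_ineq {Y : Type*} [NormedAddCommGroup Y] [InnerProductSpace ℝ Y] [CompleteSpace Y]
    (F : Y → ℝ) (hF : ConvexOn ℝ Set.univ F) {y g : Y} (hg : HasGradientAt F g y) (z : Y) :
    F y + ⟪g, z - y⟫ ≤ F z := by
  set d := z - y with hd
  set φ : ℝ → ℝ := fun t => F (y + t • d) with hφ
  have hline : ∀ t : ℝ, HasDerivAt (fun t : ℝ => y + t • d) d t := by
    intro t
    simpa using ((hasDerivAt_id t).smul_const d).const_add y
  have hderiv : HasDerivAt φ ⟪g, d⟫ 0 := by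
    have hg' : HasFDerivAt F ((InnerProductSpace.toDual ℝ Y) g) (y + (0:ℝ) • d) := by
      simpa using hasGradientAt_iff_hasFDerivAt.mp hg
    have := hg'.comp_hasDerivAt 0 (hline 0)
    exact this
  have hconv : ConvexOn ℝ Set.univ φ := by
    have haff : ConvexOn ℝ Set.univ (F ∘ (AffineMap.lineMap y (y + d) : ℝ →ᵃ[ℝ] Y)) := by
      have := hF.comp_affineMap (AffineMap.lineMap y (y + d) : ℝ →ᵃ[ℝ] Y)
      simpa [Set.preimage_univ] using this
    have : (F ∘ (AffineMap.lineMap y (y + d) : ℝ →ᵃ[ℝ] Y)) = φ := by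
      funext t
      simp [φ, AffineMap.lineMap_apply, add_comm]
  -- module structure
    rwa [this] at haff
  have hslope := hconv.le_slope_of_hasDerivAt (Set.mem_univ 0) (Set.mem_univ 1)
    one_pos hderiv
  have : ⟪g, d⟫ ≤ φ 1 - φ 0 := by
    simpa [slope_def_field, φ] using hslope
  have h0 : φ 0 = F y := by simp [φ]
  have h1 : φ 1 = F z := by simp [φ, hd]
  linarith [this, h0 ▸ h1 ▸ this]


/-- **Strict Fejér monotonicity of the Bregman iteration before the discrepancy
principle is met.** F : Y → [0, ∞) convex Fréchet differentiable with gradient ∇F,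
J proper convex, F(Ku†) ≤ δ, J(u†) < ∞. If p^{k−1} ∈ ∂J(u^{k−1}),
p^k := p^{k−1} − K*∇F(Ku^k) ∈ ∂J(u^k) and δ < F(Ku^k), then
D_J^{p^k}(u†, u^k) < D_J^{p^{k−1}}(u†, u^{k−1}). -/
theorem stmt_9
    {X Y : Type*} [NormedAddCommGroup X] [InnerProductSpace ℝ X] [CompleteSpace X]
    [NormedAddCommGroup Y] [InnerProductSpace ℝ Y] [CompleteSpace Y]
    (K : X →L[ℝ] Y)
    (F : Y → ℝ) (gF : Y → Y)
    (hFgrad : ∀ y, HasGradientAt F (gF y) y)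
    (hFconv : ConvexOn ℝ Set.univ F) (hFnonneg : ∀ y, 0 ≤ F y)
    (J : X → EReal)
    (hJbot : ∀ u, J u ≠ ⊥)
    (hJproper : ∃ u, J u ≠ ⊤)
    (hJconv : ∀ u v : X, ∀ t : ℝ, 0 ≤ t → t ≤ 1 →
      J (t • u + (1 - t) • v) ≤ (t : EReal) * J u + ((1 - t : ℝ) : EReal) * J v)
    (δ : ℝ) (hδ : 0 ≤ δ) (udag : X)
    (hdata : F (K udag) ≤ δ) (hJudag : J udag ≠ ⊤)
    (u₀ u₁ p₀ : X)
    (hp₀ : ESubgradAt J p₀ u₀)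
    (hp₁ : ESubgradAt J (p₀ - ContinuousLinearMap.adjoint K (gF (K u₁))) u₁)
    (hdisc : δ < F (K u₁)) :
    ebreg J (p₀ - ContinuousLinearMap.adjoint K (gF (K u₁))) udag u₁
      < ebreg J p₀ udag u₀ := by
  set g := gF (K u₁) with hg
  set p₁ : X := p₀ - ContinuousLinearMap.adjoint K g with hp1def
  -- finiteness of J u₀, J u₁
  have hfin : ∀ (p v : X), ESubgradAt J p v → J v ≠ ⊤ := by
    intro p v hpv htop
    have := hpv udag
    rw [htop, EReal.top_add_of_ne_bot (by simp : ((⟪p, udag - v⟫ : ℝ) : EReal) ≠ ⊥)] at this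
    exact hJudag (top_le_iff.mp this)
  have h0top := hfin _ _ hp₀
  have h1top := hfin _ _ hp₁
  set rd := (J udag).toReal with hrd
  set r0 := (J u₀).toReal with hr0
  set r1 := (J u₁).toReal with hr1
  have hJd : J udag = (rd : EReal) := (EReal.coe_toReal hJudag (hJbot _)).symm
  have hJ0 : J u₀ = (r0 : EReal) := (EReal.coe_toReal h0top (hJbot _)).symm
  have hJ1 : J u₁ = (r1 : EReal) := (EReal.coe_toReal h1top (hJbot _)).symm
  -- real subgradient inequalities
  have hA : r0 + ⟪p₀, u₁ - u₀⟫ ≤ r1 := by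
    have := hp₀ u₁
    rw [hJ0, hJ1, ← EReal.coe_add, EReal.coe_le_coe_iff] at this
    exact this
  -- gradient/convexity inequality for F
  have hB : ⟪g, K udag - K u₁⟫ ≤ F (K udag) - F (K u₁) := by
    have := grad_ineq F hFconv (hFgrad (K u₁)) (K udag)
    linarith
  -- adjoint
  have hadj : ⟪ContinuousLinearMap.adjoint K g, udag - u₁⟫ = ⟪g, K udag - K u₁⟫ := by
    rw [ContinuousLinearMap.adjoint_inner_left]
    simp [inner_sub_right, map_sub]
  have hsplit : ⟪p₀, udag - u₀⟫ = ⟪p₀, udag - u₁⟫ + ⟪p₀, u₁ - u₀⟫ := by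
    rw [← inner_add_right]
    congr 1
    abel
  have hp1inner : ⟪p₁, udag - u₁⟫
      = ⟪p₀, udag - u₁⟫ - ⟪g, K udag - K u₁⟫ := by
    rw [hp1def, inner_sub_left, hadj]
  -- final real inequality
  have hreal : rd - r1 - ⟪p₁, udag - u₁⟫ < rd - r0 - ⟪p₀, udag - u₀⟫ := by
    rw [hp1inner, hsplit]
    linarith
  show ebreg J p₁ udag u₁ < ebreg J p₀ udag u₀
  unfold ebreg
  rw [hJd, hJ0, hJ1, ← EReal.coe_sub, ← EReal.coe_sub, ← EReal.coe_sub, ← EReal.coe_sub]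
  exact_mod_cast hreal
end

section
/- Let J : X → ℝ be convex and absolutely one-homogeneous, i.e., J(c u) = |c| J(u) for all c ∈ ℝ and u ∈ X, and let σ > 0 and u_σ, v_σ with Ku_σ = σ v_σ be a generalized singular system for the quadratic fidelity, i.e., K*v_σ ∈ ∂J(u_σ). Then J(u_σ) = ⟨K*v_σ, u_σ⟩, and for every t ∈ [0, 1] one has t K*v_σ ∈ ∂J(0); moreover K*v_σ ∈ ∂J(u_σ/σ). (Hence the pair u(t) = 0, p(t) = t K*v_σ for 0 ≤ t ≤ 1 and u(t) = u_σ/σ, p(t) = K*v_σ for t ≥ 1 solves the inverse scale space flow ∂_t p(t) = K*(v_σ − Ku(t)), p(t) ∈ ∂J(u(t)), with data f = v_σ.) -/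
open scoped RealInnerProductSpace

/-- Subgradient of a real-valued convex function:
p ∈ ∂J(v) means J(w) ≥ J(v) + ⟨p, w − v⟩ for all w. -/
def RSubgradAt {X : Type*} [NormedAddCommGroup X] [InnerProductSpace ℝ X]
    (J : X → ℝ) (p v : X) : Prop :=
  ∀ w, J v + ⟪p, w - v⟫ ≤ J w

/-- **Generalized singular vectors solve the inverse scale space flow without bias.**
J : X → ℝ convex and absolutely one-homogeneous, σ > 0, Ku_σ = σv_σ and
K*v_σ ∈ ∂J(u_σ) (a generalized singular system for the quadratic fidelity). Then
J(u_σ) = ⟨K*v_σ, u_σ⟩, for every t ∈ [0, 1] one has tK*v_σ ∈ ∂J(0), and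
K*v_σ ∈ ∂J(u_σ/σ). -/
theorem stmt_14
    {X Y : Type*} [NormedAddCommGroup X] [InnerProductSpace ℝ X] [CompleteSpace X]
    [NormedAddCommGroup Y] [InnerProductSpace ℝ Y] [CompleteSpace Y]
    (K : X →L[ℝ] Y)
    (J : X → ℝ) (hJconv : ConvexOn ℝ Set.univ J)
    (hJhom : ∀ (c : ℝ) (x : X), J (c • x) = |c| * J x)
    (σ : ℝ) (hσ : 0 < σ) (uσ : X) (vσ : Y)
    (hsing : K uσ = σ • vσ)
    (hsub : RSubgradAt J (ContinuousLinearMap.adjoint K vσ) uσ) :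
    J uσ = ⟪ContinuousLinearMap.adjoint K vσ, uσ⟫
    ∧ (∀ t : ℝ, 0 ≤ t → t ≤ 1 →
        RSubgradAt J (t • ContinuousLinearMap.adjoint K vσ) 0)
    ∧ RSubgradAt J (ContinuousLinearMap.adjoint K vσ) (σ⁻¹ • uσ) := by
  set p := ContinuousLinearMap.adjoint K vσ with hp
  have hJ0 : J 0 = 0 := by
    have := hJhom 0 0
    simpa using this
  -- J uσ ≤ ⟪p, uσ⟫ from testing w = 0
  have h1 : J uσ ≤ ⟪p, uσ⟫ := by
    have := hsub 0
    rw [hJ0, zero_sub, inner_neg_right] at this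
    linarith
  -- ⟪p, uσ⟫ ≤ J uσ from testing w = 2 uσ
  have h2 : ⟪p, uσ⟫ ≤ J uσ := by
    have := hsub ((2 : ℝ) • uσ)
    have h2u : J ((2 : ℝ) • uσ) = 2 * J uσ := by
      rw [hJhom]; norm_num
    rw [h2u] at this
    have hsw : ((2 : ℝ) • uσ) - uσ = uσ := by
      rw [two_smul]; abel
    rw [hsw] at this
    linarith
  have heq : J uσ = ⟪p, uσ⟫ := le_antisymm h1 h2
  -- key: ⟪p, w⟫ ≤ J w for all w
  have hkey : ∀ w, ⟪p, w⟫ ≤ J w := by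
    intro w
    have := hsub w
    rw [inner_sub_right] at this
    linarith
  refine ⟨heq, ?_, ?_⟩
  · intro t ht0 ht1 w
    rw [hJ0, sub_zero, inner_smul_left, zero_add]
    have hw : ⟪p, w⟫ ≤ J w := hkey w
    have hw' : -⟪p, w⟫ ≤ J w := by
      have := hkey (-w)
      have hJn : J (-w) = J w := by
        have := hJhom (-1) w
        simpa using this
      rw [inner_neg_right, hJn] at this
      linarith
    have habs : |⟪p, w⟫| ≤ J w := abs_le.2 ⟨by linarith, hw⟩
    calc (starRingEnd ℝ) t * ⟪p, w⟫ = t * ⟪p, w⟫ := by simp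
      _ ≤ |t * ⟪p, w⟫| := le_abs_self _
      _ = t * |⟪p, w⟫| := by rw [abs_mul, abs_of_nonneg ht0]
      _ ≤ 1 * |⟪p, w⟫| := by
          apply mul_le_mul_of_nonneg_right ht1 (abs_nonneg _)
      _ = |⟪p, w⟫| := one_mul _
      _ ≤ J w := habs
  · intro w
    have hJs : J (σ⁻¹ • uσ) = ⟪p, σ⁻¹ • uσ⟫ := by
      rw [hJhom, abs_of_nonneg (inv_nonneg.2 hσ.le), heq, inner_smul_right]
    rw [hJs, inner_sub_right]
    have := hkey w
    linarith
end

section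
/- Let E : X → ℝ be Fréchet differentiable with gradient ∇E, let H : X → ℝ be Fréchet differentiable with gradient ∇H and γ-strongly convex (i.e., (γ/2)‖u − v‖² ≤ D_H(u, v) := H(u) − H(v) − ⟨∇H(v), u − v⟩ for all u, v), let L > 0 be such that (L/γ)H − E is convex, let J : X → ℝ ∪ {+∞} be proper and convex, and let ρ > 0. Suppose for a fixed k ≥ 1 the Bregman proximal gradient iterate satisfies the optimality condition: there exists p^k ∈ ∂J(u^k) with α^{k−1}(∇E(u^{k−1}) + p^k) = ∇H(u^{k−1}) − ∇H(u^k), where the step size satisfies 0 < α^{k−1} and α^{k−1} (L/γ) D_H(u^k, u^{k−1}) + α^{k−1} ρ D_H^{symm}(u^k, u^{k−1}) ≤ D_H^{symm}(u^k, u^{k−1}) with D_H^{symm}(u, v) := ⟨∇H(u) − ∇H(v), u − v⟩. Then the sufficient decrease E(u^k) + J(u^k) + ρ D_H^{symm}(u^k, u^{k−1}) ≤ E(u^{k−1}) + J(u^{k−1}) holds. -/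
open scoped RealInnerProductSpace

/-- First-order condition for a convex differentiable function. -/
lemma grad_convex_ineq {X : Type*} [NormedAddCommGroup X] [InnerProductSpace ℝ X] [CompleteSpace X]
    (F : X → ℝ) (hconv : ConvexOn ℝ Set.univ F) {g x : X} (hF : HasGradientAt F g x) (y : X) :
    F x + ⟪g, y - x⟫ ≤ F y := by
  set f : ℝ → ℝ := fun t => F (x + t • (y - x)) with hfdef
  have hline : HasDerivAt (fun t : ℝ => x + t • (y - x)) (y - x) 0 := by
    simpa using ((hasDerivAt_id (0:ℝ)).smul_const (y - x)).const_add x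
  have hfd : HasDerivAt f ⟪g, y - x⟫ 0 := by
    have h1 : HasFDerivAt F (InnerProductSpace.toDual ℝ X g) x :=
      hasGradientAt_iff_hasFDerivAt.1 hF
    have h2 : HasFDerivAt F (InnerProductSpace.toDual ℝ X g) (x + (0:ℝ) • (y - x)) := by
      simpa using h1
    have := h2.comp_hasDerivAt 0 hline
    exact this
  have hfc : ConvexOn ℝ Set.univ f := by
    have := hconv.comp_affineMap (AffineMap.lineMap x y)
    have heq : f = F ∘ (AffineMap.lineMap x y : ℝ →ᵃ[ℝ] X) := by
      funext t
      simp [f, AffineMap.lineMap_apply, add_comm]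
    rw [heq]
    simpa using this
  have hs := hfc.le_slope_of_hasDerivAt (Set.mem_univ 0) (Set.mem_univ 1) one_pos hfd
  have : ⟪g, y - x⟫ ≤ f 1 - f 0 := by
    simpa [slope, f] using hs
  have hf1 : f 1 = F y := by simp [f]
  have hf0 : f 0 = F x := by simp [f]
  rw [hf1, hf0] at this
  linarith

/-- **Sufficient decrease of the Bregman proximal gradient method.**
E, H : X → ℝ Fréchet differentiable with gradients ∇E, ∇H, H γ-strongly convex,
(L/γ)H − E convex, J proper convex, ρ > 0. If p^k ∈ ∂J(u^k) satisfies the optimality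
condition α^{k−1}(∇E(u^{k−1}) + p^k) = ∇H(u^{k−1}) − ∇H(u^k) with step size
0 < α^{k−1} and α^{k−1}(L/γ)D_H(u^k, u^{k−1}) + α^{k−1}ρD_H^{symm}(u^k, u^{k−1})
≤ D_H^{symm}(u^k, u^{k−1}), then
E(u^k) + J(u^k) + ρD_H^{symm}(u^k, u^{k−1}) ≤ E(u^{k−1}) + J(u^{k−1}). -/
theorem stmt_16
    {X : Type*} [NormedAddCommGroup X] [InnerProductSpace ℝ X] [CompleteSpace X]
    (E : X → ℝ) (gE : X → X) (hE : ∀ u, HasGradientAt E (gE u) u)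
    (H : X → ℝ) (gH : X → X) (hH : ∀ u, HasGradientAt H (gH u) u)
    (γ : ℝ) (hγ : 0 < γ)
    (hHsc : ∀ u v : X, (γ / 2) * ‖u - v‖ ^ 2 ≤ H u - H v - ⟪gH v, u - v⟫)
    (L : ℝ) (hL : 0 < L)
    (hLconv : ConvexOn ℝ Set.univ (fun u => (L / γ) * H u - E u))
    (J : X → EReal)
    (hJbot : ∀ u, J u ≠ ⊥)
    (hJproper : ∃ u, J u ≠ ⊤)
    (hJconv : ∀ u v : X, ∀ t : ℝ, 0 ≤ t → t ≤ 1 →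
      J (t • u + (1 - t) • v) ≤ (t : EReal) * J u + ((1 - t : ℝ) : EReal) * J v)
    (ρ : ℝ) (hρ : 0 < ρ)
    (u₀ u₁ p₁ : X) (hp₁ : ESubgradAt J p₁ u₁)
    (α : ℝ) (hα : 0 < α)
    (hopt : α • (gE u₀ + p₁) = gH u₀ - gH u₁)
    (hstep : α * (L / γ) * (H u₁ - H u₀ - ⟪gH u₀, u₁ - u₀⟫)
        + α * ρ * ⟪gH u₁ - gH u₀, u₁ - u₀⟫
      ≤ ⟪gH u₁ - gH u₀, u₁ - u₀⟫) :
    ((E u₁ : ℝ) : EReal) + J u₁ + ((ρ * ⟪gH u₁ - gH u₀, u₁ - u₀⟫ : ℝ) : EReal)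
      ≤ ((E u₀ : ℝ) : EReal) + J u₀ := by
  set d := u₁ - u₀ with hd
  set S : ℝ := ⟪gH u₁ - gH u₀, u₁ - u₀⟫ with hS
  set D : ℝ := H u₁ - H u₀ - ⟪gH u₀, u₁ - u₀⟫ with hD
  -- J u₁ is finite
  have hJ1top : J u₁ ≠ ⊤ := by
    intro htop
    obtain ⟨w, hw⟩ := hJproper
    have := hp₁ w
    rw [htop] at this
    rw [EReal.top_add_coe] at this
    exact hw (top_le_iff.1 this)
  set r₁ : ℝ := (J u₁).toReal with hr₁
  have hJ1 : J u₁ = (r₁ : EReal) := (EReal.coe_toReal hJ1top (hJbot u₁)).symm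
  -- gradient inequality for (L/γ)H - E at u₀
  have hFgrad : HasGradientAt (fun u => (L / γ) * H u - E u)
      ((L / γ) • gH u₀ - gE u₀) u₀ := by
    rw [hasGradientAt_iff_hasFDerivAt]
    have h1 := (hasGradientAt_iff_hasFDerivAt.1 (hH u₀)).const_mul (L / γ)
    have h2 := hasGradientAt_iff_hasFDerivAt.1 (hE u₀)
    have := h1.sub h2
    refine this.congr_fderiv ?_
    ext v
    simp [inner_sub_left, real_inner_smul_left, mul_comm]
  have hEineq : E u₁ ≤ E u₀ + ⟪gE u₀, u₁ - u₀⟫ + (L / γ) * D := by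
    have := grad_convex_ineq _ hLconv hFgrad u₁
    simp only [inner_sub_left, real_inner_smul_left] at this
    simp only [hD]
    linarith
  -- optimality condition, paired with u₁ - u₀
  have hopt' : α * (⟪gE u₀, u₁ - u₀⟫ + ⟪p₁, u₁ - u₀⟫) = -S := by
    have := congrArg (fun v => (⟪v, u₁ - u₀⟫ : ℝ)) hopt
    simp only [real_inner_smul_left, inner_add_left, inner_sub_left] at this
    rw [hS]
    simp only [inner_sub_left]
    linarith
  -- subgradient inequality at u₀
  have hsub := hp₁ u₀
  have hinner : (⟪p₁, u₀ - u₁⟫ : ℝ) = -⟪p₁, u₁ - u₀⟫ := by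
    rw [← neg_sub u₁ u₀, inner_neg_right]
  -- case on J u₀
  rcases eq_or_ne (J u₀) ⊤ with h0top | h0top
  · rw [h0top]
    rw [EReal.coe_add_top]
    exact le_top
  · set r₀ : ℝ := (J u₀).toReal with hr₀
    have hJ0 : J u₀ = (r₀ : EReal) := (EReal.coe_toReal h0top (hJbot u₀)).symm
    rw [hJ0, hJ1] at hsub ⊢
    rw [hinner] at hsub
    have hsub' : r₁ + -⟪p₁, u₁ - u₀⟫ ≤ r₀ := by
      have : ((r₁ + -⟪p₁, u₁ - u₀⟫ : ℝ) : EReal) ≤ ((r₀ : ℝ) : EReal) := by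
        push_cast
        exact hsub
      exact_mod_cast this
    -- reduce goal to reals
    have key : E u₁ + r₁ + ρ * S ≤ E u₀ + r₀ := by
      have h6 : α * (⟪gE u₀, u₁ - u₀⟫ + ⟪p₁, u₁ - u₀⟫ + (L / γ) * D + ρ * S) ≤ α * 0 := by
        rw [mul_zero]
        nlinarith [hstep]
      have h7 : ⟪gE u₀, u₁ - u₀⟫ + ⟪p₁, u₁ - u₀⟫ + (L / γ) * D + ρ * S ≤ 0 :=
        le_of_mul_le_mul_left h6 hα
      linarith
    have : ((E u₁ + r₁ + ρ * S : ℝ) : EReal) ≤ ((E u₀ + r₀ : ℝ) : EReal) :=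
      EReal.coe_le_coe_iff.2 key
    push_cast at this
    convert this using 2
    exact EReal.coe_mul _ _
end

section
/- Let E : X → ℝ be Fréchet differentiable with L-Lipschitz gradient ∇E, let H : X → ℝ be Fréchet differentiable with δ-Lipschitz gradient ∇H, let J : X → ℝ ∪ {+∞} be proper and convex, and let α^{k−1} > 0. Suppose the Bregman proximal gradient optimality condition holds: p^k ∈ ∂J(u^k) and α^{k−1}(∇E(u^{k−1}) + p^k) = ∇H(u^{k−1}) − ∇H(u^k). Then the optimality gap at the new iterate is controlled by the step: ‖∇E(u^k) + p^k‖ ≤ (L + δ/α^{k−1}) ‖u^k − u^{k−1}‖. -/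
open scoped RealInnerProductSpace

/-- **Control of the optimality gap of the Bregman proximal gradient method.**
E : X → ℝ Fréchet differentiable with L-Lipschitz gradient ∇E, H : X → ℝ Fréchet
differentiable with δ-Lipschitz gradient ∇H, J proper convex, α^{k−1} > 0. If
p^k ∈ ∂J(u^k) and α^{k−1}(∇E(u^{k−1}) + p^k) = ∇H(u^{k−1}) − ∇H(u^k), then
‖∇E(u^k) + p^k‖ ≤ (L + δ/α^{k−1})‖u^k − u^{k−1}‖. -/
theorem stmt_17
    {X : Type*} [NormedAddCommGroup X] [InnerProductSpace ℝ X] [CompleteSpace X]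
    (E : X → ℝ) (gE : X → X) (hE : ∀ u, HasGradientAt E (gE u) u)
    (L : ℝ) (hgELip : ∀ u v : X, ‖gE u - gE v‖ ≤ L * ‖u - v‖)
    (H : X → ℝ) (gH : X → X) (hH : ∀ u, HasGradientAt H (gH u) u)
    (δ : ℝ) (hgHLip : ∀ u v : X, ‖gH u - gH v‖ ≤ δ * ‖u - v‖)
    (J : X → EReal)
    (hJbot : ∀ u, J u ≠ ⊥)
    (hJproper : ∃ u, J u ≠ ⊤)
    (hJconv : ∀ u v : X, ∀ t : ℝ, 0 ≤ t → t ≤ 1 →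
      J (t • u + (1 - t) • v) ≤ (t : EReal) * J u + ((1 - t : ℝ) : EReal) * J v)
    (u₀ u₁ p₁ : X) (hp₁ : ESubgradAt J p₁ u₁)
    (α : ℝ) (hα : 0 < α)
    (hopt : α • (gE u₀ + p₁) = gH u₀ - gH u₁) :
    ‖gE u₁ + p₁‖ ≤ (L + δ / α) * ‖u₁ - u₀‖ := by
  have h1 : gE u₀ + p₁ = α⁻¹ • (gH u₀ - gH u₁) := by
    rw [← hopt, smul_smul, inv_mul_cancel₀ hα.ne', one_smul]
  have h2 : gE u₁ + p₁ = (gE u₁ - gE u₀) + (gE u₀ + p₁) := by abel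
  calc ‖gE u₁ + p₁‖ ≤ ‖gE u₁ - gE u₀‖ + ‖gE u₀ + p₁‖ := by rw [h2]; exact norm_add_le _ _
    _ ≤ L * ‖u₁ - u₀‖ + (δ / α) * ‖u₁ - u₀‖ := by
        refine add_le_add (hgELip _ _) ?_
        rw [h1, norm_smul, norm_inv, Real.norm_of_nonneg hα.le, div_mul_eq_mul_div,
          div_eq_inv_mul]
        refine mul_le_mul_of_nonneg_left ?_ (inv_nonneg.2 hα.le)
        simpa [← norm_neg (u₀ - u₁), neg_sub] using hgHLip u₀ u₁
    _ = (L + δ / α) * ‖u₁ - u₀‖ := by ring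
end

section
/- Let E : X → ℝ be Fréchet differentiable with gradient ∇E and let J : X → ℝ be convex such that its subdifferential is δ-strongly monotone in the dual sense: δ ‖p − q‖² ≤ ⟨p − q, u − v⟩ for all u, v ∈ X, p ∈ ∂J(u), q ∈ ∂J(v) (this is the strong convexity of the convex conjugate J*). Suppose for a fixed k ≥ 1 the nonconvex linearized Bregman iterates satisfy: p^{k−1} ∈ ∂J(u^{k−1}) and p^k := p^{k−1} − (1/α^{k−1}) ∇E(u^{k−1}) ∈ ∂J(u^k) for some step size α^{k−1} > 0. Then the gradient of E at the previous iterate is bounded by the step: ‖∇E(u^{k−1})‖ ≤ (α^{k−1}/δ) ‖u^k − u^{k−1}‖. -/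
open scoped RealInnerProductSpace

/-- **Gradient bound for the linearized Bregman iteration for nonconvex
functionals.** E : X → ℝ Fréchet differentiable with gradient ∇E, J : X → ℝ convex
with δ-strongly monotone subdifferential (strong convexity of J*). If
p^{k−1} ∈ ∂J(u^{k−1}) and p^k := p^{k−1} − (1/α^{k−1})∇E(u^{k−1}) ∈ ∂J(u^k) for a step
size α^{k−1} > 0, then ‖∇E(u^{k−1})‖ ≤ (α^{k−1}/δ)‖u^k − u^{k−1}‖. -/
theorem stmt_19
    {X : Type*} [NormedAddCommGroup X] [InnerProductSpace ℝ X] [CompleteSpace X]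
    (E : X → ℝ) (gE : X → X) (hE : ∀ u, HasGradientAt E (gE u) u)
    (J : X → ℝ) (hJconv : ConvexOn ℝ Set.univ J)
    (δ : ℝ) (hδ : 0 < δ)
    (hmono : ∀ u v p q : X, RSubgradAt J p u → RSubgradAt J q v →
      δ * ‖p - q‖ ^ 2 ≤ ⟪p - q, u - v⟫)
    (u₀ u₁ p₀ : X)
    (hp₀ : RSubgradAt J p₀ u₀)
    (α : ℝ) (hα : 0 < α)
    (hp₁ : RSubgradAt J (p₀ - (1 / α) • gE u₀) u₁) :
    ‖gE u₀‖ ≤ (α / δ) * ‖u₁ - u₀‖ := by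
  have key := hmono u₀ u₁ p₀ (p₀ - (1 / α) • gE u₀) hp₀ hp₁
  have hdiff : p₀ - (p₀ - (1 / α) • gE u₀) = (1 / α) • gE u₀ := by abel
  rw [hdiff] at key
  have hnorm : ‖(1 / α) • gE u₀‖ = (1 / α) * ‖gE u₀‖ := by
    rw [norm_smul, Real.norm_eq_abs, abs_of_pos (by positivity)]
  have hinner : ⟪(1 / α) • gE u₀, u₀ - u₁⟫ ≤ (1 / α) * ‖gE u₀‖ * ‖u₁ - u₀‖ := by
    calc ⟪(1 / α) • gE u₀, u₀ - u₁⟫ ≤ ‖(1 / α) • gE u₀‖ * ‖u₀ - u₁‖ :=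
          real_inner_le_norm _ _
      _ = (1 / α) * ‖gE u₀‖ * ‖u₁ - u₀‖ := by rw [hnorm, norm_sub_rev]
  rw [hnorm] at key
  have h2 : δ * ((1 / α) * ‖gE u₀‖) ^ 2 ≤ (1 / α) * ‖gE u₀‖ * ‖u₁ - u₀‖ :=
    le_trans key hinner
  rcases eq_or_lt_of_le (norm_nonneg (gE u₀)) with h0 | h0
  · rw [← h0]; positivity
  · have hα' : (0:ℝ) < 1 / α := by positivity
    have h3 : δ * ((1 / α) * ‖gE u₀‖) ≤ ‖u₁ - u₀‖ := by
      have hpos : 0 < (1 / α) * ‖gE u₀‖ := by positivity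
      nlinarith
    rw [div_mul_eq_mul_div, le_div_iff₀ hδ]
    calc ‖gE u₀‖ * δ = α * (δ * ((1 / α) * ‖gE u₀‖)) := by field_simp
      _ ≤ α * ‖u₁ - u₀‖ := by nlinarith
end
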